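/- For every state s ∈ S, every strategy σ ∈ Σ^Opt satisfies Pr_{σ,s}(□¬Bad) = Val(s); that is, Σ^Opt ⊆ Σ_{M,s}(□¬Bad). -/

import Mathlib

open scoped ENNReal NNReal Classical
open Filter

universe u v

variable {S : Type u} {A : Type v}

/-- A finite MDP: `P s a = some d` means action `a` is legal at `s` and `d` is a
probability distribution on `S`; every state has at least one legal action. -/
structure MDP (S : Type u) (A : Type v) [Fintype S] [Fintype A] where
  P : S → A → Option (S → NNReal)
  sum_one : ∀ s a d, P s a = some d → (∑ s', d s') = 1
  exists_legal : ∀ s, ∃ a, (P s a).isSome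

/-- Last state of an alternating path starting at `s` with steps `steps`. -/
def lastState : S → List (A × S) → S
  | s, [] => s
  | _, (_, s') :: rest => lastState s' rest

/-- A finite path: a start state together with a list of (action, next-state) steps. -/
structure FPath (S : Type u) (A : Type v) where
  start : S
  steps : List (A × S)

namespace FPath

def last (ρ : FPath S A) : S := lastState ρ.start ρ.steps

def states (ρ : FPath S A) : List S := ρ.start :: ρ.steps.map Prod.snd

def length (ρ : FPath S A) : ℕ := ρ.steps.length

end FPath

/-- A (raw) strategy: maps each finite path (start state + steps) to a distribution on actions. -/
def Strat (S : Type u) (A : Type v) := S → List (A × S) → A → ℝ≥0∞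

/-- Shifted strategy `σ_ρ` for `ρ = (s₀, pre)`: `σ_ρ(ρ') = σ(ρ·ρ')`. -/
def shiftStrat (σ : Strat S A) (s₀ : S) (pre : List (A × S)) : Strat S A :=
  fun _ steps a => σ s₀ (pre ++ steps) a

/-- Generic cylinder weight (product of strategy- and transition-probabilities along the
steps), relative to a transition kernel `p`. The accumulator `pre` is the path-prefix so far. -/
noncomputable def wtP (p : S → A → S → ℝ≥0∞) (σ : Strat S A) (s₀ : S) :
    List (A × S) → List (A × S) → ℝ≥0∞
  | _, [] => 1
  | pre, (a, s') :: rest =>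
      σ s₀ pre a * p (lastState s₀ pre) a s' * wtP p σ s₀ (pre ++ [(a, s')]) rest
  termination_by pre l => l.length

/-- Generic cylinder probability of path `ρ` from start state `s`, kernel `p`. -/
noncomputable def cylProbP (p : S → A → S → ℝ≥0∞) (σ : Strat S A) (s : S) (ρ : FPath S A) :
    ℝ≥0∞ :=
  if ρ.start = s then wtP p σ ρ.start [] ρ.steps else 0

namespace MDP

variable [Fintype S] [Fintype A]

def legal (M : MDP S A) (s : S) (a : A) : Prop := (M.P s a).isSome

noncomputable def prob (M : MDP S A) (s : S) (a : A) (s' : S) : ℝ≥0∞ :=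
  (M.P s a).elim 0 fun d => (d s' : ℝ≥0∞)

/-- `ρ` is a finite path of `M` from `s`: every action legal, every transition of
positive probability. -/
def IsPathFrom (M : MDP S A) : S → List (A × S) → Prop
  | _, [] => True
  | s, (a, s') :: rest => M.legal s a ∧ 0 < M.prob s a s' ∧ M.IsPathFrom s' rest

def IsPath (M : MDP S A) (ρ : FPath S A) : Prop := M.IsPathFrom ρ.start ρ.steps

/-- `σ` is a strategy: at every finite path it gives a probability distribution on actions
supported on actions legal at the last state. -/
def IsStrategy (M : MDP S A) (σ : Strat S A) : Prop :=
  ∀ s steps, M.IsPathFrom s steps →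
    (∑ a, σ s steps a) = 1 ∧ ∀ a, 0 < σ s steps a → M.legal (lastState s steps) a

/-- Cylinder probability `P_{σ,s}(ρ)` in `M`. -/
noncomputable def cylProb (M : MDP S A) (σ : Strat S A) (s : S) (ρ : FPath S A) : ℝ≥0∞ :=
  cylProbP M.prob σ s ρ

/-- `T` is a set of sink states: each `t ∈ T` has exactly one legal action, leading back
to `t` with probability `1`. -/
def SinkSet (M : MDP S A) (T : Set S) : Prop :=
  ∀ t ∈ T, (∃! a, M.legal t a) ∧ ∀ a, M.legal t a → M.prob t a t = 1

/-- Generic pruned finite-path predicate: all states have positive value `v` and every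
step uses an `opt` state-action pair with positive transition probability in `M`. -/
def IsPathFromPruned (M : MDP S A) (v : S → ℝ≥0∞) (opt : S → A → Prop) :
    S → List (A × S) → Prop
  | s, [] => 0 < v s
  | s, (a, s') :: rest =>
      0 < v s ∧ opt s a ∧ 0 < M.prob s a s' ∧ M.IsPathFromPruned v opt s' rest

/-! ### Reachability -/

/-- `ρ` is a `T`-hitting path: its last state lies in `T` and no other state does. -/
def HitsFirst (T : Set S) (ρ : FPath S A) : Prop :=
  ρ.last ∈ T ∧ ∀ x ∈ ρ.states.dropLast, x ∉ T

/-- `Pr_{σ,s}(◊T)`: sum over `T`-hitting paths starting at `s` of their cylinder probabilities. -/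
noncomputable def prReach (M : MDP S A) (σ : Strat S A) (s : S) (T : Set S) : ℝ≥0∞ :=
  ∑' ρ : {ρ : FPath S A // M.IsPath ρ ∧ HitsFirst T ρ ∧ ρ.start = s}, M.cylProb σ s ρ.1

/-- `Val(s)` for reachability: supremum over strategies of `Pr_{σ,s}(◊T)`. -/
noncomputable def reachVal (M : MDP S A) (T : Set S) (s : S) : ℝ≥0∞ :=
  ⨆ (σ : Strat S A) (_ : M.IsStrategy σ), M.prReach σ s T

/-- `(s,a) ∈ Opt` for reachability. -/
def OptR (M : MDP S A) (T : Set S) (s : S) (a : A) : Prop :=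
  M.legal s a ∧ M.reachVal T s = ∑ s', M.prob s a s' * M.reachVal T s'

/-- `σ ∈ Σ^Opt` for reachability. -/
def SigmaOptR (M : MDP S A) (T : Set S) (σ : Strat S A) : Prop :=
  ∀ s steps, M.IsPathFrom s steps → ∀ a, 0 < σ s steps a → M.OptR T (lastState s steps) a

/-- Transition probabilities of the pruned MDP `M'` for reachability. -/
noncomputable def probR' (M : MDP S A) (T : Set S) (s : S) (a : A) (s' : S) : ℝ≥0∞ :=
  if M.OptR T s a ∧ 0 < M.reachVal T s then
    M.prob s a s' * M.reachVal T s' / M.reachVal T s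
  else 0

/-- `ρ` is a finite path of the pruned MDP `M'` (reachability version). -/
def IsPathR' (M : MDP S A) (T : Set S) (ρ : FPath S A) : Prop :=
  M.IsPathFromPruned (M.reachVal T) (M.OptR T) ρ.start ρ.steps

/-- Cylinder probability `P'_{σ,s}(ρ)` in the pruned MDP `M'` (reachability version). -/
noncomputable def cylProbR' (M : MDP S A) (T : Set S) (σ : Strat S A) (s : S) (ρ : FPath S A) :
    ℝ≥0∞ :=
  cylProbP (M.probR' T) σ s ρ

/-- `Pr'_{σ,s}(◊T)` in the pruned MDP `M'`. -/
noncomputable def prReach' (M : MDP S A) (σ : Strat S A) (s : S) (T : Set S) : ℝ≥0∞ :=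
  ∑' ρ : {ρ : FPath S A // M.IsPathR' T ρ ∧ HitsFirst T ρ ∧ ρ.start = s},
    M.cylProbR' T σ s ρ.1

/-- Probability of hitting `T` for the first time in exactly `r` steps, in `M`. -/
noncomputable def hitLenProb (M : MDP S A) (σ : Strat S A) (s : S) (T : Set S) (r : ℕ) :
    ℝ≥0∞ :=
  ∑' ρ : {ρ : FPath S A // M.IsPath ρ ∧ HitsFirst T ρ ∧ ρ.start = s ∧ ρ.length = r},
    M.cylProb σ s ρ.1

/-- Probability of hitting `T` for the first time in exactly `r` steps, in `M'`. -/
noncomputable def hitLenProb' (M : MDP S A) (σ : Strat S A) (s : S) (T : Set S) (r : ℕ) :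
    ℝ≥0∞ :=
  ∑' ρ : {ρ : FPath S A // M.IsPathR' T ρ ∧ HitsFirst T ρ ∧ ρ.start = s ∧ ρ.length = r},
    M.cylProbR' T σ s ρ.1

/-- Conditional expected length to target `E_{σ,s}(len_T | ◊T)`. -/
noncomputable def condExpLen (M : MDP S A) (σ : Strat S A) (s : S) (T : Set S) : ℝ≥0∞ :=
  ∑' r : ℕ, (r : ℝ≥0∞) * M.hitLenProb σ s T r / M.prReach σ s T

/-- Expected length to target in `M'`, `E'_{σ,s}(len_T)`; `∞` unless `Pr'_{σ,s}(◊T) = 1`. -/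
noncomputable def expLen' (M : MDP S A) (σ : Strat S A) (s : S) (T : Set S) : ℝ≥0∞ :=
  if M.prReach' σ s T = 1 then ∑' r : ℕ, (r : ℝ≥0∞) * M.hitLenProb' σ s T r else ⊤

/-! ### Safety -/

/-- `Safe_n(σ,s)`: probability of the paths of length `n` from `s` avoiding `Bad`. -/
noncomputable def safeN (M : MDP S A) (σ : Strat S A) (s : S) (Bad : Set S) (n : ℕ) : ℝ≥0∞ :=
  ∑' ρ : {ρ : FPath S A //
      M.IsPath ρ ∧ ρ.start = s ∧ ρ.length = n ∧ ∀ x ∈ ρ.states, x ∉ Bad},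
    M.cylProb σ s ρ.1

/-- `Pr_{σ,s}(□¬Bad) := ⨅ n, Safe_n(σ,s)`. -/
noncomputable def prSafe (M : MDP S A) (σ : Strat S A) (s : S) (Bad : Set S) : ℝ≥0∞ :=
  ⨅ n : ℕ, M.safeN σ s Bad n

/-- `Val(s)` for safety: supremum over strategies of `Pr_{σ,s}(□¬Bad)`. -/
noncomputable def safeVal (M : MDP S A) (Bad : Set S) (s : S) : ℝ≥0∞ :=
  ⨆ (σ : Strat S A) (_ : M.IsStrategy σ), M.prSafe σ s Bad

/-- `(s,a) ∈ Opt` for safety. -/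
def OptS (M : MDP S A) (Bad : Set S) (s : S) (a : A) : Prop :=
  M.legal s a ∧ M.safeVal Bad s = ∑ s', M.prob s a s' * M.safeVal Bad s'

/-- `σ ∈ Σ^Opt` for safety. -/
def SigmaOptS (M : MDP S A) (Bad : Set S) (σ : Strat S A) : Prop :=
  ∀ s steps, M.IsPathFrom s steps → ∀ a, 0 < σ s steps a → M.OptS Bad (lastState s steps) a

/-- `UPreⁱ(Bad)`. -/
def UPre (M : MDP S A) (Bad : Set S) : ℕ → Set S
  | 0 => Bad
  | i + 1 => {s | ∀ a, M.legal s a → ∃ s' ∈ M.UPre Bad i, 0 < M.prob s a s'}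

/-- `Good := S \ UPre*(Bad)`. -/
def GoodSet (M : MDP S A) (Bad : Set S) : Set S := (⋃ i, M.UPre Bad i)ᶜ

/-- `V := S \ (Good ∪ Bad)`. -/
def VSet (M : MDP S A) (Bad : Set S) : Set S := (M.GoodSet Bad ∪ Bad)ᶜ

/-- `Pr_{σ,s}(GoodCyl(ρ)) := P_{σ,s}(ρ) · Pr_{σ_ρ, last(ρ)}(□¬Bad)`. -/
noncomputable def goodCyl (M : MDP S A) (σ : Strat S A) (s : S) (Bad : Set S) (ρ : FPath S A) :
    ℝ≥0∞ :=
  M.cylProb σ s ρ * M.prSafe (shiftStrat σ ρ.start ρ.steps) ρ.last Bad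

/-- Transition probabilities of the pruned MDP `M'` for safety. -/
noncomputable def probS' (M : MDP S A) (Bad : Set S) (s : S) (a : A) (s' : S) : ℝ≥0∞ :=
  if M.OptS Bad s a ∧ 0 < M.safeVal Bad s then
    M.prob s a s' * M.safeVal Bad s' / M.safeVal Bad s
  else 0

/-- `ρ` is a finite path of the pruned MDP `M'` (safety version). -/
def IsPathS' (M : MDP S A) (Bad : Set S) (ρ : FPath S A) : Prop :=
  M.IsPathFromPruned (M.safeVal Bad) (M.OptS Bad) ρ.start ρ.steps

/-- Cylinder probability `P'_{σ,s}(ρ)` in the pruned MDP `M'` (safety version). -/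
noncomputable def cylProbS' (M : MDP S A) (Bad : Set S) (σ : Strat S A) (s : S)
    (ρ : FPath S A) : ℝ≥0∞ :=
  cylProbP (M.probS' Bad) σ s ρ

end MDP

/-- `Reward_n(ρ) = ∑_{i<n} R(sᵢ, aᵢ)` for `ρ` starting at `s` with steps `steps`. -/
def rewardOf (R : S → A → ℝ) : S → List (A × S) → ℝ
  | _, [] => 0
  | s, (a, s') :: rest => R s a + rewardOf R s' rest

namespace MDP

variable [Fintype S] [Fintype A]

/-- `E'_{σ,s}(Reward_n)` in the pruned MDP `M'` (safety version). -/
noncomputable def expRewN' (M : MDP S A) (Bad : Set S) (R : S → A → ℝ) (σ : Strat S A)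
    (s : S) (n : ℕ) : ℝ :=
  ∑' ρ : {ρ : FPath S A // M.IsPathS' Bad ρ ∧ ρ.start = s ∧ ρ.length = n},
    (M.cylProbS' Bad σ s ρ.1).toReal * rewardOf R ρ.1.start ρ.1.steps

/-- `E'_{σ,s}(MP) := liminf_n (1/n)·E'_{σ,s}(Reward_n)`. -/
noncomputable def mp' (M : MDP S A) (Bad : Set S) (R : S → A → ℝ) (σ : Strat S A) (s : S) :
    ℝ :=
  Filter.atTop.liminf fun n : ℕ => M.expRewN' Bad R σ s n / n

/-- `E_{σ,s}(Reward_n | □¬Bad)`. -/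
noncomputable def condExpRewN (M : MDP S A) (Bad : Set S) (R : S → A → ℝ) (σ : Strat S A)
    (s : S) (n : ℕ) : ℝ :=
  (∑' ρ : {ρ : FPath S A // M.IsPath ρ ∧ ρ.start = s ∧ ρ.length = n},
    (M.goodCyl σ s Bad ρ.1).toReal * rewardOf R ρ.1.start ρ.1.steps) /
  (M.prSafe σ s Bad).toReal

/-- `E_{σ,s}(MP | □¬Bad) := liminf_n (1/n)·E_{σ,s}(Reward_n | □¬Bad)`. -/
noncomputable def condMP (M : MDP S A) (Bad : Set S) (R : S → A → ℝ) (σ : Strat S A)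
    (s : S) : ℝ :=
  Filter.atTop.liminf fun n : ℕ => M.condExpRewN Bad R σ s n / n

end MDP



section Stmt9Aux

variable {S : Type u} {A : Type v}

lemma lastState_append' (s : S) (l₁ l₂ : List (A × S)) :
    lastState s (l₁ ++ l₂) = lastState (lastState s l₁) l₂ := by
  induction l₁ generalizing s with
  | nil => rfl
  | cons p rest ih => cases p with | mk a s' => simpa [lastState] using ih s'

variable [Fintype S] [Fintype A] (M : MDP S A)

lemma legal_of_prob_pos' {t : S} {a : A} {s' : S} (h : 0 < M.prob t a s') : M.legal t a := by
  rcases hP : M.P t a with _ | d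
  · simp [MDP.prob, hP] at h
  · simp [MDP.legal, hP]

lemma isPathFrom_append' {s₀ : S} {pre : List (A × S)} {a : A} {s' : S}
    (h : M.IsPathFrom s₀ pre) (hl : M.legal (lastState s₀ pre) a)
    (hp : 0 < M.prob (lastState s₀ pre) a s') :
    M.IsPathFrom s₀ (pre ++ [(a, s')]) := by
  induction pre generalizing s₀ with
  | nil => exact ⟨hl, hp, trivial⟩
  | cons p rest ih =>
    cases p with
    | mk b t' =>
      simp only [MDP.IsPathFrom] at h ⊢
      exact ⟨h.1, h.2.1, ih h.2.2 hl hp⟩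

lemma safeN_zero_le_one' (σ : Strat S A) (s : S) (Bad : Set S) :
    M.safeN σ s Bad 0 ≤ 1 := by
  have h1 : M.safeN σ s Bad 0 = ∑' ρ : FPath S A,
      Set.indicator {ρ : FPath S A | M.IsPath ρ ∧ ρ.start = s ∧ ρ.length = 0 ∧
        ∀ x ∈ ρ.states, x ∉ Bad} (fun ρ => M.cylProb σ s ρ) ρ :=
    tsum_subtype _ _
  rw [h1]
  have h2 : (1:ℝ≥0∞) = ∑' ρ : FPath S A, (if ρ = (⟨s, []⟩ : FPath S A) then (1:ℝ≥0∞) else 0) :=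
    (tsum_ite_eq _ 1).symm
  rw [h2]
  refine ENNReal.tsum_le_tsum fun ρ => ?_
  by_cases hm : ρ ∈ {ρ : FPath S A | M.IsPath ρ ∧ ρ.start = s ∧ ρ.length = 0 ∧
      ∀ x ∈ ρ.states, x ∉ Bad}
  · obtain ⟨st, l⟩ := ρ
    have hl : l = [] := List.length_eq_zero_iff.mp hm.2.2.1
    have hst : st = s := hm.2.1
    subst hl; subst hst
    rw [Set.indicator_of_mem hm]
    simp [MDP.cylProb, cylProbP, wtP]
  · rw [Set.indicator_of_notMem hm]
    exact zero_le

lemma safeVal_le_one' (Bad : Set S) (s : S) : M.safeVal Bad s ≤ 1 := by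
  rw [MDP.safeVal]
  refine iSup₂_le fun σ' hσ' => ?_
  rw [MDP.prSafe]
  exact le_trans (iInf_le _ 0) (safeN_zero_le_one' M σ' s Bad)

lemma safeVal_zero_of_bad' {Bad : Set S} {s : S} (hb : s ∈ Bad) : M.safeVal Bad s = 0 := by
  refine le_antisymm ?_ zero_le
  rw [MDP.safeVal]
  refine iSup₂_le fun σ' _ => ?_
  rw [MDP.prSafe]
  refine le_trans (iInf_le _ 0) ?_
  have h0 : M.safeN σ' s Bad 0 = 0 := by
    rw [MDP.safeN, ENNReal.tsum_eq_zero]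
    rintro ⟨ρ, hρ⟩
    refine absurd hb (hρ.2.2.2 s ?_)
    rw [← hρ.2.1]
    exact List.mem_cons_self
  rw [h0]

/-- Tail safety sum: over all step-lists of length `n` extending prefix `pre`. -/
noncomputable def tsf (σ : Strat S A) (Bad : Set S)
    (s₀ : S) (n : ℕ) (pre : List (A × S)) : ℝ≥0∞ :=
  ∑' l : List (A × S),
    if M.IsPathFrom (lastState s₀ pre) l ∧ l.length = n ∧
        (∀ x ∈ lastState s₀ pre :: l.map Prod.snd, x ∉ Bad)
    then wtP M.prob σ s₀ pre l else 0

lemma tsf_le_safeN (σ : Strat S A) (Bad : Set S) (s : S) (n : ℕ) :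
    tsf M σ Bad s n [] ≤ M.safeN σ s Bad n := by
  have h1 : M.safeN σ s Bad n = ∑' ρ : FPath S A,
      Set.indicator {ρ : FPath S A | M.IsPath ρ ∧ ρ.start = s ∧ ρ.length = n ∧
        ∀ x ∈ ρ.states, x ∉ Bad} (fun ρ => M.cylProb σ s ρ) ρ :=
    tsum_subtype _ _
  rw [h1, tsf]
  have hinj : Function.Injective (fun l : List (A × S) => (⟨s, l⟩ : FPath S A)) := by
    intro l₁ l₂ h
    simpa using congrArg FPath.steps h
  refine le_trans (le_of_eq (tsum_congr fun l => ?_))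
    (ENNReal.tsum_comp_le_tsum_of_injective hinj
      (Set.indicator {ρ : FPath S A | M.IsPath ρ ∧ ρ.start = s ∧ ρ.length = n ∧
        ∀ x ∈ ρ.states, x ∉ Bad} (fun ρ => M.cylProb σ s ρ)))
  show _ = Set.indicator _ _ (⟨s, l⟩ : FPath S A)
  rw [Set.indicator_apply]
  simp only [Set.mem_setOf_eq, MDP.IsPath, FPath.length, FPath.states, lastState,
    MDP.cylProb, cylProbP]
  by_cases h : M.IsPathFrom s l ∧ l.length = n ∧ ∀ x ∈ s :: l.map Prod.snd, x ∉ Bad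
  · split_ifs <;> simp_all
    
  · split_ifs <;> simp_all

lemma safeVal_le_tsf (σ : Strat S A) (Bad : Set S) (hσ : M.IsStrategy σ)
    (hopt : M.SigmaOptS Bad σ) (s₀ : S) :
    ∀ (n : ℕ) (pre : List (A × S)), M.IsPathFrom s₀ pre →
      M.safeVal Bad (lastState s₀ pre) ≤ tsf M σ Bad s₀ n pre := by
  intro n
  induction n with
  | zero =>
    intro pre hpre
    by_cases ht : lastState s₀ pre ∈ Bad
    · rw [safeVal_zero_of_bad' M ht]; exact zero_le
    · refine le_trans (safeVal_le_one' M Bad _) ?_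
      rw [tsf]
      refine le_trans ?_ (ENNReal.le_tsum ([] : List (A × S)))
      simp [MDP.IsPathFrom, wtP, ht]
  | succ n ih =>
    intro pre hpre
    by_cases ht : lastState s₀ pre ∈ Bad
    · rw [safeVal_zero_of_bad' M ht]; exact zero_le
    have hsum : (∑ a, σ s₀ pre a) = 1 := (hσ s₀ pre hpre).1
    have key : ∀ p : A × S,
        σ s₀ pre p.1 * M.prob (lastState s₀ pre) p.1 p.2 * M.safeVal Bad p.2
          ≤ ∑' rest : List (A × S),
              (if M.IsPathFrom (lastState s₀ pre) (p :: rest) ∧ (p :: rest).length = n + 1 ∧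
                  (∀ x ∈ lastState s₀ pre :: (p :: rest).map Prod.snd, x ∉ Bad)
               then wtP M.prob σ s₀ pre (p :: rest) else 0) := by
      rintro ⟨a, s'⟩
      by_cases hσa : σ s₀ pre a = 0
      · simp [hσa]
      by_cases hprob : M.prob (lastState s₀ pre) a s' = 0
      · simp [hprob]
      have hppos : 0 < M.prob (lastState s₀ pre) a s' := pos_iff_ne_zero.mpr hprob
      have hlegal : M.legal (lastState s₀ pre) a := legal_of_prob_pos' M hppos
      have hpath : M.IsPathFrom s₀ (pre ++ [(a, s')]) := isPathFrom_append' M hpre hlegal hppos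
      have hlast : lastState s₀ (pre ++ [(a, s')]) = s' := by
        rw [lastState_append']; rfl
      have hih := ih (pre ++ [(a, s')]) hpath
      rw [hlast] at hih
      have heq : ∀ rest : List (A × S),
          (if M.IsPathFrom (lastState s₀ pre) ((a, s') :: rest) ∧
              ((a, s') :: rest).length = n + 1 ∧
              (∀ x ∈ lastState s₀ pre :: ((a, s') :: rest).map Prod.snd, x ∉ Bad)
           then wtP M.prob σ s₀ pre ((a, s') :: rest) else 0)
          = σ s₀ pre a * M.prob (lastState s₀ pre) a s' *
            (if M.IsPathFrom (lastState s₀ (pre ++ [(a, s')])) rest ∧ rest.length = n ∧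
                (∀ x ∈ lastState s₀ (pre ++ [(a, s')]) :: rest.map Prod.snd, x ∉ Bad)
             then wtP M.prob σ s₀ (pre ++ [(a, s')]) rest else 0) := by
        intro rest
        rw [hlast]
        by_cases hc : M.IsPathFrom s' rest ∧ rest.length = n ∧
            (∀ x ∈ s' :: rest.map Prod.snd, x ∉ Bad)
        · have hC1 : M.IsPathFrom (lastState s₀ pre) ((a, s') :: rest) ∧
              ((a, s') :: rest).length = n + 1 ∧
              (∀ x ∈ lastState s₀ pre :: ((a, s') :: rest).map Prod.snd, x ∉ Bad) := by
            refine ⟨⟨hlegal, hppos, hc.1⟩, by simp [hc.2.1], ?_⟩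
            intro x hx
            rcases List.mem_cons.mp hx with h | h
            · subst h; exact ht
            · exact hc.2.2 x (by simpa using h)
          rw [if_pos hC1, if_pos hc, wtP]
        · rw [if_neg ?_, if_neg hc, mul_zero]
          rintro ⟨hp1, hp2, hp3⟩
          exact hc ⟨hp1.2.2, by simpa using hp2,
            fun x hx => hp3 x (List.mem_cons_of_mem _ (by simpa using hx))⟩
      calc σ s₀ pre a * M.prob (lastState s₀ pre) a s' * M.safeVal Bad s'
          ≤ σ s₀ pre a * M.prob (lastState s₀ pre) a s' *
              tsf M σ Bad s₀ n (pre ++ [(a, s')]) := mul_le_mul_right hih _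
        _ = ∑' rest : List (A × S), σ s₀ pre a * M.prob (lastState s₀ pre) a s' *
              (if M.IsPathFrom (lastState s₀ (pre ++ [(a, s')])) rest ∧ rest.length = n ∧
                  (∀ x ∈ lastState s₀ (pre ++ [(a, s')]) :: rest.map Prod.snd, x ∉ Bad)
               then wtP M.prob σ s₀ (pre ++ [(a, s')]) rest else 0) := by
              rw [tsf, ENNReal.tsum_mul_left]
        _ = _ := tsum_congr fun rest => (heq rest).symm
    have step1 : M.safeVal Bad (lastState s₀ pre)
        = ∑ p : A × S, σ s₀ pre p.1 * M.prob (lastState s₀ pre) p.1 p.2 *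
            M.safeVal Bad p.2 := by
      rw [Fintype.sum_prod_type]
      have hrow : ∀ a : A,
          (∑ s' : S, σ s₀ pre a * M.prob (lastState s₀ pre) a s' * M.safeVal Bad s')
          = σ s₀ pre a * M.safeVal Bad (lastState s₀ pre) := by
        intro a
        rcases eq_or_ne (σ s₀ pre a) 0 with h0 | h0
        · simp [h0]
        · have hOpt := hopt s₀ pre hpre a (pos_iff_ne_zero.mpr h0)
          rw [hOpt.2, Finset.mul_sum]
          exact Finset.sum_congr rfl fun s' _ => by ring
      rw [Finset.sum_congr rfl fun a _ => hrow a, ← Finset.sum_mul, hsum, one_mul]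
    rw [step1]
    have hinj : Function.Injective
        (fun q : (A × S) × List (A × S) => q.1 :: q.2) := by
      intro q₁ q₂ h
      rw [List.cons.injEq] at h
      exact Prod.ext h.1 h.2
    calc ∑ p : A × S, σ s₀ pre p.1 * M.prob (lastState s₀ pre) p.1 p.2 * M.safeVal Bad p.2
        ≤ ∑ p : A × S, ∑' rest : List (A × S),
            (if M.IsPathFrom (lastState s₀ pre) (p :: rest) ∧ (p :: rest).length = n + 1 ∧
                (∀ x ∈ lastState s₀ pre :: (p :: rest).map Prod.snd, x ∉ Bad)
             then wtP M.prob σ s₀ pre (p :: rest) else 0) :=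
          Finset.sum_le_sum fun p _ => key p
      _ = ∑' p : A × S, ∑' rest : List (A × S),
            (if M.IsPathFrom (lastState s₀ pre) (p :: rest) ∧ (p :: rest).length = n + 1 ∧
                (∀ x ∈ lastState s₀ pre :: (p :: rest).map Prod.snd, x ∉ Bad)
             then wtP M.prob σ s₀ pre (p :: rest) else 0) := (tsum_fintype _).symm
      _ = ∑' q : (A × S) × List (A × S),
            (if M.IsPathFrom (lastState s₀ pre) (q.1 :: q.2) ∧ (q.1 :: q.2).length = n + 1 ∧
                (∀ x ∈ lastState s₀ pre :: (q.1 :: q.2).map Prod.snd, x ∉ Bad)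
             then wtP M.prob σ s₀ pre (q.1 :: q.2) else 0) := (ENNReal.tsum_prod).symm
      _ ≤ tsf M σ Bad s₀ (n + 1) pre := by
          rw [tsf]
          exact ENNReal.tsum_comp_le_tsum_of_injective hinj _

end Stmt9Aux

/-- every strategy `σ ∈ Σ^Opt` satisfies `Pr_{σ,s}(□¬Bad) = Val(s)`. -/
theorem stmt9 {S : Type u} {A : Type v} [Fintype S] [Fintype A] [Nonempty S] [Nonempty A]
    (M : MDP S A) (Bad : Set S) (hBad : M.SinkSet Bad) (s : S)
    (σ : Strat S A) (hσ : M.IsStrategy σ) (hopt : M.SigmaOptS Bad σ) :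
    M.prSafe σ s Bad = M.safeVal Bad s := by
  refine le_antisymm ?_ ?_
  · rw [MDP.safeVal]
    exact le_iSup₂ (f := fun σ' (_ : M.IsStrategy σ') => M.prSafe σ' s Bad) σ hσ
  · rw [MDP.prSafe]
    refine le_iInf fun n => ?_
    refine le_trans ?_ (tsf_le_safeN M σ Bad s n)
    exact safeVal_le_tsf M σ Bad hσ hopt s n [] trivial
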